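/- Let L be a finite geometric lattice of rank r. Then the diameter of the facet-ridge incidence graph of the order complex of L is at most r(r-1)/2 = binom(r,2); that is, any two maximal chains of L are connected by a path of length at most binom(r,2) in this graph. -/

import Mathlib

/-- A finite bounded lattice is *geometric* if it is atomistic (every element is a join
of atoms) and semimodular (whenever distinct `y`, `y'` both cover `x`, the join `y ⊔ y'`
covers both). -/
def IsGeometricLattice (L : Type*) [Lattice L] [BoundedOrder L] : Prop :=
  (∀ x : L, ∃ s : Finset L, (∀ a ∈ s, IsAtom a) ∧ s.sup id = x) ∧
  (∀ x y y' : L, y ≠ y' → x ⋖ y → x ⋖ y' → y ⋖ (y ⊔ y') ∧ y' ⋖ (y ⊔ y'))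

/-- The facet-ridge incidence graph of the order complex of `L`: the vertices are the
maximal chains of `L`, two maximal chains being adjacent iff they differ in exactly one
element. -/
def facetRidgeGraph (L : Type*) [PartialOrder L] :
    SimpleGraph {c : Set L // IsMaxChain (· ≤ ·) c} where
  Adj c c' := ∃ x ∈ c.1, ∃ y ∈ c'.1, x ≠ y ∧ c.1 \ {x} = c'.1 \ {y}
  symm := by
    constructor
    rintro c c' ⟨x, hx, y, hy, hxy, h⟩
    exact ⟨y, hy, x, hx, hxy.symm, h.symm⟩
  loopless := by
    constructor
    rintro c ⟨x, hx, y, hy, hxy, h⟩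
    have : y ∈ c.1 \ {x} := ⟨hy, by simpa using hxy.symm⟩
    rw [h] at this
    exact this.2 rfl

namespace FRGaux

variable {L : Type*} [Lattice L] [BoundedOrder L] {r : ℕ} {x y : ℕ → L}

/-- A cover sequence from `⊥` to `⊤` of length `r`. -/
def MC (r : ℕ) (x : ℕ → L) : Prop :=
  x 0 = ⊥ ∧ x r = ⊤ ∧ ∀ i < r, x i ⋖ x (i + 1)

lemma MC.le (h : MC r x) : ∀ {i j : ℕ}, i ≤ j → j ≤ r → x i ≤ x j := by
  have key : ∀ d i, i + d ≤ r → x i ≤ x (i + d) := by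
    intro d
    induction d with
    | zero => intro i _; simp
    | succ d ih =>
      intro i hir
      calc x i ≤ x (i + d) := ih i (by omega)
        _ ≤ x (i + d + 1) := (h.2.2 (i + d) (by omega)).le
  intro i j hij hjr
  have := key (j - i) i (by omega)
  rwa [Nat.add_sub_cancel' hij] at this

lemma MC.lt (h : MC r x) {i j : ℕ} (hij : i < j) (hjr : j ≤ r) : x i < x j :=
  lt_of_lt_of_le (h.2.2 i (by omega)).lt (h.le hij hjr)

lemma MC.inj (h : MC r x) {i j : ℕ} (hi : i ≤ r) (hj : j ≤ r) (hxy : x i = x j) :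
    i = j := by
  rcases lt_trichotomy i j with hlt | he | hlt
  · exact absurd hxy (h.lt hlt hj).ne
  · exact he
  · exact absurd hxy.symm (h.lt hlt hi).ne

lemma MC.isMaxChain (h : MC r x) : IsMaxChain (· ≤ ·) (x '' Set.Iic r) := by
  constructor
  · rintro _ ⟨i, hi, rfl⟩ _ ⟨j, hj, rfl⟩ _
    rcases le_total i j with hij | hij
    · exact Or.inl (h.le hij hj)
    · exact Or.inr (h.le hij hi)
  · intro t ht hsub
    refine hsub.antisymm ?_
    intro z hz
    by_contra hzs
    -- z is comparable with every x i
    have hcomp : ∀ i ≤ r, x i < z ∨ z < x i := by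
      intro i hi
      have hne : x i ≠ z := fun e => hzs ⟨i, hi, e⟩
      rcases ht (hsub ⟨i, hi, rfl⟩) hz hne with h1 | h1
      · exact Or.inl (lt_of_le_of_ne h1 hne)
      · exact Or.inr (lt_of_le_of_ne h1 fun e => hne e.symm)
    classical
    have h0 : x 0 < z := by
      rcases hcomp 0 (Nat.zero_le _) with h1 | h1
      · exact h1
      · exact absurd (h.1 ▸ h1) (by simp)
    set P : ℕ → Prop := fun i => x i < z with hP
    have hPr : ¬ P r := by
      intro hp
      rcases hcomp r le_rfl with _ | h1
      · have : (⊤ : L) < z := h.2.1 ▸ hp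
        exact absurd this (by simp)
      · exact absurd (hp.trans h1) (lt_irrefl _)
    let i := Nat.findGreatest P r
    have hir : i ≤ r := Nat.findGreatest_le r
    have hPi : P i := Nat.findGreatest_spec (Nat.zero_le _) h0
    have hine : i ≠ r := fun e => hPr (e ▸ hPi)
    have hilt : i < r := lt_of_le_of_ne hir hine
    have hnot : ¬ P (i + 1) := Nat.findGreatest_is_greatest (Nat.lt_succ_self i) (Nat.succ_le_of_lt hilt)
    have hz2 : z < x (i + 1) := by
      rcases hcomp (i + 1) (by omega) with h1 | h1
      · exact absurd h1 hnot
      · exact h1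
    exact (h.2.2 i hilt).2 hPi hz2

/-- The vertex of the facet-ridge graph corresponding to a cover sequence. -/
def MC.vtx (h : MC r x) : {c : Set L // IsMaxChain (· ≤ ·) c} :=
  ⟨x '' Set.Iic r, h.isMaxChain⟩

lemma vtx_eq (hx : MC r x) (hy : MC r y) (h : ∀ i ≤ r, x i = y i) :
    hx.vtx = hy.vtx := by
  refine Subtype.ext ?_
  show x '' Set.Iic r = y '' Set.Iic r
  ext z
  constructor
  · rintro ⟨i, hi, rfl⟩; exact ⟨i, hi, (h i hi).symm⟩
  · rintro ⟨i, hi, rfl⟩; exact ⟨i, hi, h i hi⟩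

lemma adj_of_single_diff (hx : MC r x) (hy : MC r y) {i : ℕ} (hi : i ≤ r)
    (hne : x i ≠ y i) (h : ∀ j ≤ r, j ≠ i → x j = y j) :
    (facetRidgeGraph L).Adj hx.vtx hy.vtx := by
  refine ⟨x i, ⟨i, hi, rfl⟩, y i, ⟨i, hi, rfl⟩, hne, ?_⟩
  show x '' Set.Iic r \ {x i} = y '' Set.Iic r \ {y i}
  ext z
  simp only [Set.mem_diff, Set.mem_singleton_iff, Set.mem_image, Set.mem_Iic]
  constructor
  · rintro ⟨⟨j, hj, rfl⟩, hzne⟩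
    have hji : j ≠ i := fun e => hzne (e ▸ rfl)
    refine ⟨⟨j, hj, (h j hj hji).symm⟩, ?_⟩
    rw [h j hj hji]
    exact fun e => hji (hy.inj hj hi e)
  · rintro ⟨⟨j, hj, rfl⟩, hzne⟩
    have hji : j ≠ i := fun e => hzne (e ▸ rfl)
    refine ⟨⟨j, hj, h j hj hji⟩, ?_⟩
    rw [← h j hj hji]
    exact fun e => hji (hx.inj hj hi e)

lemma walk_le_one (hx : MC r x) (hy : MC r y) (i : ℕ)
    (h : ∀ j ≤ r, j ≠ i → x j = y j) :
    ∃ w : (facetRidgeGraph L).Walk hx.vtx hy.vtx, w.length ≤ 1 := by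
  by_cases hir : i ≤ r
  · by_cases hne : x i = y i
    · have : hx.vtx = hy.vtx := vtx_eq hx hy (by
        intro j hj
        by_cases hji : j = i
        · exact hji ▸ hne
        · exact h j hj hji)
      exact ⟨(SimpleGraph.Walk.nil).copy rfl this, by simp⟩
    · exact ⟨(adj_of_single_diff hx hy hir hne h).toWalk, by simp⟩
  · have : hx.vtx = hy.vtx := vtx_eq hx hy fun j hj => h j hj (fun e => hir (e ▸ hj))
    exact ⟨(SimpleGraph.Walk.nil).copy rfl this, by simp⟩

lemma walk_seq (D : ℕ → ℕ → L) (N : ℕ) (hD : ∀ t, t ≤ N → MC r (D t))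
    (hstep : ∀ t, t < N → ∃ i, ∀ j ≤ r, j ≠ i → D t j = D (t + 1) j) :
    ∃ w : (facetRidgeGraph L).Walk (hD 0 (Nat.zero_le _)).vtx (hD N le_rfl).vtx,
      w.length ≤ N := by
  induction N with
  | zero => exact ⟨SimpleGraph.Walk.nil, by simp⟩
  | succ N ih =>
    obtain ⟨w1, hw1⟩ := ih (fun t ht => hD t (by omega)) (fun t ht => hstep t (by omega))
    obtain ⟨i, hi⟩ := hstep N (Nat.lt_succ_self N)
    obtain ⟨w2, hw2⟩ := walk_le_one (hD N (by omega)) (hD (N + 1) le_rfl) i hi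
    exact ⟨w1.append w2, by simpa using Nat.add_le_add hw1 hw2⟩



lemma exists_MC [Fintype L] {c : Set L}
    (hc : IsMaxChain (· ≤ ·) c) (hcard : c.ncard = r + 1) :
    ∃ (x : ℕ → L) (_ : MC r x), x '' Set.Iic r = c := by
  classical
  haveI : Fintype c := (Set.toFinite c).fintype
  have hcard' : Fintype.card c = r + 1 := by
    rw [← Nat.card_eq_fintype_card, Nat.card_coe_set_eq, hcard]
  letI : LinearOrder c :=
    { Subtype.partialOrder _ with
      le_total := fun a b => hc.1.total a.2 b.2
      toDecidableLE := Classical.decRel _ }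
  let e := monoEquivOfFin c hcard'
  have hcoe_le : ∀ a b : Fin (r + 1), a ≤ b → ((e a : L) ≤ (e b : L)) := by
    intro a b hab
    exact_mod_cast e.monotone hab
  have hcoe_lt : ∀ a b : Fin (r + 1), a < b → ((e a : L) < (e b : L)) := by
    intro a b hab
    exact_mod_cast e.strictMono hab
  set x : ℕ → L := fun i => (e ⟨min i r, by omega⟩ : L) with hx
  have hmem : ∀ i, x i ∈ c := fun i => (e _).2
  have hxval : ∀ j : Fin (r + 1), x j.val = (e j : L) := by
    intro j
    have hj : (⟨min j.val r, by omega⟩ : Fin (r + 1)) = j :=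
      Fin.ext (by simp [Nat.lt_succ_iff.mp j.isLt])
    simp only [hx]
    rw [hj]
  have hx0 : x 0 = ⊥ := by
    have hbot : (⊥ : L) ∈ c := hc.bot_mem
    have := hcoe_le 0 (e.symm ⟨⊥, hbot⟩) (Fin.zero_le _)
    rw [OrderIso.apply_symm_apply] at this
    have h0 : x 0 = (e 0 : L) := hxval 0
    exact le_bot_iff.mp (h0 ▸ this)
  have hxr : x r = ⊤ := by
    have htop : (⊤ : L) ∈ c := hc.top_mem
    have := hcoe_le (e.symm ⟨⊤, htop⟩) ⟨r, Nat.lt_succ_self r⟩ (Fin.le_def.mpr (Nat.lt_succ_iff.mp (e.symm ⟨⊤, htop⟩).isLt))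
    rw [OrderIso.apply_symm_apply] at this
    have h0 : x r = (e ⟨r, Nat.lt_succ_self r⟩ : L) := hxval ⟨r, Nat.lt_succ_self r⟩
    exact top_le_iff.mp (h0 ▸ this)
  have hrange : ∀ z ∈ c, ∃ j : Fin (r + 1), (e j : L) = z := by
    intro z hz
    exact ⟨e.symm ⟨z, hz⟩, by rw [OrderIso.apply_symm_apply]⟩
  have hcov : ∀ i < r, x i ⋖ x (i + 1) := by
    intro i hi
    have hmini : min i r = i := min_eq_left (by omega)
    have hmini1 : min (i + 1) r = i + 1 := min_eq_left (by omega)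
    set a : Fin (r + 1) := ⟨min i r, by omega⟩ with ha
    set b : Fin (r + 1) := ⟨min (i + 1) r, by omega⟩ with hb
    have hab : a < b := by
      rw [Fin.lt_def]; simp [ha, hb, hmini, hmini1]
    constructor
    · exact hcoe_lt a b hab
    · intro w hw1 hw2
      -- w is strictly between two consecutive elements; show insert w c is a chain
      have hwc : w ∉ c := by
        intro hwc
        obtain ⟨j, hj⟩ := hrange w hwc
        have h1 : a < j := by
          by_contra h
          push_neg at h
          exact absurd (hj ▸ hcoe_le j a h) (not_le_of_gt hw1)
        have h2 : j < b := by
          by_contra h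
          push_neg at h
          exact absurd (hj ▸ hcoe_le b j h) (not_le_of_gt hw2)
        rw [Fin.lt_def] at h1 h2
        simp [ha, hb, hmini, hmini1] at h1 h2
        omega
      have hchain : IsChain (· ≤ ·) (insert w c) := by
        refine hc.1.insert ?_
        intro z hz _
        obtain ⟨j, hj⟩ := hrange z hz
        rcases le_or_gt j a with h1 | h1
        · exact Or.inr (hj ▸ ((hcoe_le j a h1).trans hw1.le))
        · have h1' : b ≤ j := by
            rw [Fin.le_def]
            rw [Fin.lt_def] at h1
            simp only [ha, hb, hmini, hmini1] at h1 ⊢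
            omega
          exact Or.inl ((hw2.le).trans (hj ▸ hcoe_le b j h1'))
      have := hc.2 hchain (Set.subset_insert _ _)
      exact hwc (this ▸ Set.mem_insert w c)
  refine ⟨x, ⟨hx0, hxr, hcov⟩, ?_⟩
  apply Set.eq_of_subset_of_subset
  · rintro _ ⟨i, _, rfl⟩
    exact hmem i
  · intro z hz
    obtain ⟨j, hj⟩ := hrange z hz
    exact ⟨j.val, Set.mem_Iic.mpr (Nat.lt_succ_iff.mp j.isLt), (hxval j).trans hj⟩


lemma key (hgeo : IsGeometricLattice L) :
    ∀ m k (x y : ℕ → L) (hx : MC r x) (hy : MC r y), k + m = r →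
      (∀ i ≤ k, x i = y i) →
      ∃ w : (facetRidgeGraph L).Walk hx.vtx hy.vtx, w.length ≤ m.choose 2 := by
  intro m
  induction m with
  | zero =>
    intro k x y hx hy hkr hagree
    have hv : hx.vtx = hy.vtx := vtx_eq hx hy (fun i hi => hagree i (by omega))
    exact ⟨SimpleGraph.Walk.nil.copy rfl hv, by simp⟩
  | succ m ih =>
    intro k x y hx hy hkr hagree
    classical
    set a := y (k + 1) with ha
    have hkr' : k < r := by omega
    have hcova : x k ⋖ a := by
      rw [hagree k le_rfl]; exact hy.2.2 k hkr'
    have hex : ∃ i, a ≤ x i := ⟨r, hx.2.1 ▸ le_top⟩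
    set j := Nat.find hex with hjdef
    have hja : a ≤ x j := Nat.find_spec hex
    have hjmin : ∀ i < j, ¬ a ≤ x i := fun i hi => Nat.find_min hex hi
    have hjr : j ≤ r := Nat.find_le (hx.2.1 ▸ le_top)
    have hkj : k < j := by
      rcases Nat.lt_or_ge k j with h | h
      · exact h
      · exact absurd (hja.trans (hx.le h (Nat.le_of_lt hkr'))) hcova.lt.not_ge
    -- cover facts
    have cov1' : ∀ d, k + d < j → x (k + d) ⋖ x (k + d) ⊔ a := by
      intro d
      induction d with
      | zero =>
        intro _
        have : x (k + 0) ⊔ a = a := sup_eq_right.mpr hcova.lt.le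
        rw [this]
        exact hcova
      | succ d ihd =>
        intro hdj
        have h1 : x (k + d) ⋖ x (k + d) ⊔ a := ihd (by omega)
        have h2 : x (k + d) ⋖ x (k + d + 1) := hx.2.2 _ (by omega)
        have hne : x (k + d + 1) ≠ x (k + d) ⊔ a := by
          intro e
          exact hjmin (k + d + 1) (by omega) (e ▸ le_sup_right)
        obtain ⟨hc1, _⟩ := hgeo.2 (x (k + d)) (x (k + d + 1)) (x (k + d) ⊔ a) hne h2 h1
        have heq : x (k + d + 1) ⊔ (x (k + d) ⊔ a) = x (k + d + 1) ⊔ a := by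
          rw [← sup_assoc, sup_eq_left.mpr h2.le]
        exact heq ▸ hc1
    have cov1 : ∀ i, k ≤ i → i < j → x i ⋖ x i ⊔ a := by
      intro i hki hij
      obtain ⟨d, rfl⟩ := Nat.exists_eq_add_of_le hki
      exact cov1' d hij
    have cov2 : ∀ i, k ≤ i → i + 1 < j → (x i ⊔ a) ⋖ (x (i + 1) ⊔ a) := by
      intro i hki hij
      have h1 : x i ⋖ x i ⊔ a := cov1 i hki (by omega)
      have h2 : x i ⋖ x (i + 1) := hx.2.2 i (by omega)
      have hne : x (i + 1) ≠ x i ⊔ a := by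
        intro e
        exact hjmin (i + 1) (by omega) (e ▸ le_sup_right)
      obtain ⟨_, hc2⟩ := hgeo.2 (x i) (x (i + 1)) (x i ⊔ a) hne h2 h1
      have heq : x (i + 1) ⊔ (x i ⊔ a) = x (i + 1) ⊔ a := by
        rw [← sup_assoc, sup_eq_left.mpr h2.le]
      exact heq ▸ hc2
    have ztop : x (j - 1) ⊔ a = x j := by
      have hcovj : x (j - 1) ⋖ x j := by
        have := hx.2.2 (j - 1) (by omega)
        rwa [show j - 1 + 1 = j by omega] at this
      have hlt : x (j - 1) < x (j - 1) ⊔ a := (cov1 (j - 1) (by omega) (by omega)).lt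
      have hle : x (j - 1) ⊔ a ≤ x j := sup_le (hx.le (by omega) hjr) hja
      rcases hle.lt_or_eq with h | h
      · exact absurd h (hcovj.2 hlt)
      · exact h
    -- the flip sequence
    set N := j - 1 - k with hN
    set D : ℕ → ℕ → L := fun t i =>
      if i < j - t then x i else if i ≤ j then x (i - 1) ⊔ a else x i with hD
    have hDval : ∀ t i, D t i = if i < j - t then x i else if i ≤ j then x (i - 1) ⊔ a else x i :=
      fun t i => rfl
    have hDMC : ∀ t, t ≤ N → MC r (D t) := by
      intro t ht
      have hjt1 : k + 1 ≤ j - t := by omega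
      have hjtj : j - t ≤ j := by omega
      refine ⟨?_, ?_, ?_⟩
      · rw [hDval, if_pos (by omega)]
        exact hx.1
      · by_cases hrj : j < r
        · rw [hDval, if_neg (by omega), if_neg (by omega)]
          exact hx.2.1
        · have hjr' : j = r := le_antisymm hjr (le_of_not_gt hrj)
          rw [hDval, if_neg (by omega), if_pos (by omega),
            show r - 1 = j - 1 by omega, ztop, hjr']
          exact hx.2.1
      · intro i hi
        by_cases hA : i < j - t
        · by_cases h1 : i + 1 < j - t
          · rw [hDval, hDval, if_pos hA, if_pos h1]
            exact hx.2.2 i hi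
          · rw [hDval, hDval, if_pos hA, if_neg h1, if_pos (by omega),
              show i + 1 - 1 = i from rfl]
            exact cov1 i (by omega) (by omega)
        · by_cases hB : i + 1 ≤ j
          · rw [hDval, hDval, if_neg hA, if_pos (by omega), if_neg (by omega), if_pos hB,
              show i + 1 - 1 = i from rfl]
            have := cov2 (i - 1) (by omega) (by omega)
            rwa [show i - 1 + 1 = i by omega] at this
          · by_cases hC : i ≤ j
            · have hij : i = j := by omega
              rw [hDval, hDval, if_neg hA, if_pos hC, if_neg (by omega), if_neg (by omega),
                show i - 1 = j - 1 by omega, ztop, hij]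
              exact hx.2.2 j (by omega)
            · rw [hDval, hDval, if_neg (by omega), if_neg (by omega),
                if_neg (by omega), if_neg (by omega)]
              exact hx.2.2 i hi
    have hstep : ∀ t, t < N → ∃ idx, ∀ i ≤ r, i ≠ idx → D t i = D (t + 1) i := by
      intro t ht
      refine ⟨j - t - 1, fun i _ hne => ?_⟩
      rw [hDval, hDval]
      split_ifs <;> first | rfl | omega
    obtain ⟨w1, hw1⟩ := walk_seq D N hDMC hstep
    have veq0 : hx.vtx = (hDMC 0 (Nat.zero_le _)).vtx := by
      refine vtx_eq hx _ (fun i hi => ?_)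
      rcases Nat.lt_or_ge i j with h | h
      · rw [hDval, if_pos (by omega)]
      · rcases Nat.lt_or_ge j i with h' | h'
        · rw [hDval, if_neg (by omega), if_neg (by omega)]
        · have hij : i = j := by omega
          rw [hDval, if_neg (by omega), if_pos (by omega), show i - 1 = j - 1 by omega,
            ztop, hij]
    have hagree' : ∀ i ≤ k + 1, D N i = y i := by
      intro i hi
      have hjN : j - N = k + 1 := by omega
      rcases Nat.lt_or_ge i (k + 1) with h | h
      · rw [hDval, if_pos (by omega)]
        exact hagree i (by omega)
      · have hik : i = k + 1 := by omega
        rw [hDval, if_neg (by omega), if_pos (by omega), show i - 1 = k by omega, hik,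
          sup_eq_right.mpr hcova.lt.le]
    obtain ⟨w2, hw2⟩ := ih (k + 1) (D N) y (hDMC N le_rfl) hy (by omega) hagree'
    refine ⟨(w1.copy veq0.symm rfl).append w2, ?_⟩
    have hNm : N ≤ m := by omega
    have hch : Nat.choose (m + 1) 2 = m + Nat.choose m 2 := by
      rw [Nat.choose_succ_succ, Nat.choose_one_right]
    rw [SimpleGraph.Walk.length_append, SimpleGraph.Walk.length_copy, hch]
    omega

end FRGaux


open FRGaux in
/-- The facet-ridge incidence graph of the order complex of a finite geometric lattice of
rank `r` has diameter at most `r.choose 2`: any two maximal chains are connected by a path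
of length at most `r.choose 2`. -/
theorem stmt0 (L : Type*) [Lattice L] [Fintype L] [BoundedOrder L] (r : ℕ)
    (hgeo : IsGeometricLattice L)
    (hrank : ∀ c : Set L, IsMaxChain (· ≤ ·) c → c.ncard = r + 1) :
    ∀ c c' : {c : Set L // IsMaxChain (· ≤ ·) c},
      ∃ w : (facetRidgeGraph L).Walk c c', w.length ≤ r.choose 2 := by
  intro c c'
  obtain ⟨x, hx, hxc⟩ := FRGaux.exists_MC c.2 (hrank c.1 c.2)
  obtain ⟨y, hy, hyc⟩ := FRGaux.exists_MC c'.2 (hrank c'.1 c'.2)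
  have hvx : hx.vtx = c := Subtype.ext hxc
  have hvy : hy.vtx = c' := Subtype.ext hyc
  obtain ⟨w, hw⟩ := FRGaux.key hgeo r 0 x y hx hy (Nat.zero_add r)
    (fun i hi => by
      have : i = 0 := Nat.le_zero.mp hi
      rw [this, hx.1, hy.1])
  exact ⟨w.copy hvx hvy, by simpa using hw⟩
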